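/- For a > 0 and any c ∈ [−a⁴, 3a⁴), the two distinct points (±√(3a⁴−c)/(2a), √(c+a⁴)/(2a)) lie on the level set f_a⁻¹(c) and have the same gradient: ∇f_a at both points equals 4a·(0, √(c + a⁴)). Hence the gradient ∇f_a is not injective on the overlevel set f_a⁻¹((k, +∞)) for any k ∈ [−a⁴, 3a⁴). -/

import Mathlib

lemma fd_formula (a : ℝ) (p v : ℝ × ℝ) :
    fderiv ℝ (fun p : ℝ×ℝ => (p.1^2+p.2^2)^2 - 2*a^2*(p.1^2-p.2^2)) p v =
      (4*(p.1^2+p.2^2)*p.1 - 4*a^2*p.1)*v.1 + (4*(p.1^2+p.2^2)*p.2 + 4*a^2*p.2)*v.2 := by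
  have hs : (fun p : ℝ×ℝ => (p.1^2+p.2^2)^2 - 2*a^2*(p.1^2-p.2^2)) =
      (fun p : ℝ×ℝ => (p.1*p.1+p.2*p.2)*(p.1*p.1+p.2*p.2) - 2*a^2*(p.1*p.1-p.2*p.2)) := by
    funext q; ring
  rw [hs]
  have h1 : HasFDerivAt (fun p : ℝ×ℝ => p.1) (ContinuousLinearMap.fst ℝ ℝ ℝ) p :=
    hasFDerivAt_fst
  have h2 : HasFDerivAt (fun p : ℝ×ℝ => p.2) (ContinuousLinearMap.snd ℝ ℝ ℝ) p :=
    hasFDerivAt_snd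
  have hx := h1.mul h1
  have hy := h2.mul h2
  have H := ((hx.add hy).mul (hx.add hy)).sub ((hx.sub hy).const_mul (2*a^2))
  erw [H.fderiv]
  simp [ContinuousLinearMap.smul_apply]
  ring

/-- For `a > 0` and `c ∈ [−a⁴, 3a⁴)`, the points
`(±√(3a⁴−c)/(2a), √(c+a⁴)/(2a))` lie on the level set `f_a⁻¹(c)` and have the
same gradient `4a·(0, √(c+a⁴))` (distinct points when `c > −a⁴`); hence `∇f_a`
is not injective on `f_a⁻¹((k, +∞))` for any `k ∈ [−a⁴, 3a⁴)`. -/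
theorem stmt_18 (a : ℝ) (ha : 0 < a)
    (f : ℝ × ℝ → ℝ)
    (hf : f = fun p => (p.1 ^ 2 + p.2 ^ 2) ^ 2 - 2 * a ^ 2 * (p.1 ^ 2 - p.2 ^ 2)) :
    (∀ c ∈ Set.Ico (-a ^ 4) (3 * a ^ 4),
      let p₁ : ℝ × ℝ :=
        (Real.sqrt (3 * a ^ 4 - c) / (2 * a), Real.sqrt (c + a ^ 4) / (2 * a))
      let p₂ : ℝ × ℝ :=
        (-(Real.sqrt (3 * a ^ 4 - c) / (2 * a)), Real.sqrt (c + a ^ 4) / (2 * a))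
      f p₁ = c ∧ f p₂ = c ∧
      (∀ v : ℝ × ℝ, fderiv ℝ f p₁ v = 4 * a * Real.sqrt (c + a ^ 4) * v.2) ∧
      (∀ v : ℝ × ℝ, fderiv ℝ f p₂ v = 4 * a * Real.sqrt (c + a ^ 4) * v.2) ∧
      (-a ^ 4 < c → p₁ ≠ p₂)) ∧
    (∀ k ∈ Set.Ico (-a ^ 4) (3 * a ^ 4),
      ¬ Set.InjOn (fun p => fderiv ℝ f p) {p : ℝ × ℝ | k < f p}) := by
  subst hf
  have ha' : (2*a) ≠ 0 := by positivity
  have main : ∀ c ∈ Set.Ico (-a ^ 4) (3 * a ^ 4),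
      let p₁ : ℝ × ℝ :=
        (Real.sqrt (3 * a ^ 4 - c) / (2 * a), Real.sqrt (c + a ^ 4) / (2 * a))
      let p₂ : ℝ × ℝ :=
        (-(Real.sqrt (3 * a ^ 4 - c) / (2 * a)), Real.sqrt (c + a ^ 4) / (2 * a))
      (fun p : ℝ×ℝ => (p.1 ^ 2 + p.2 ^ 2) ^ 2 - 2 * a ^ 2 * (p.1 ^ 2 - p.2 ^ 2)) p₁ = c ∧
      (fun p : ℝ×ℝ => (p.1 ^ 2 + p.2 ^ 2) ^ 2 - 2 * a ^ 2 * (p.1 ^ 2 - p.2 ^ 2)) p₂ = c ∧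
      (∀ v : ℝ × ℝ, fderiv ℝ (fun p : ℝ×ℝ => (p.1 ^ 2 + p.2 ^ 2) ^ 2 - 2 * a ^ 2 * (p.1 ^ 2 - p.2 ^ 2)) p₁ v
        = 4 * a * Real.sqrt (c + a ^ 4) * v.2) ∧
      (∀ v : ℝ × ℝ, fderiv ℝ (fun p : ℝ×ℝ => (p.1 ^ 2 + p.2 ^ 2) ^ 2 - 2 * a ^ 2 * (p.1 ^ 2 - p.2 ^ 2)) p₂ v
        = 4 * a * Real.sqrt (c + a ^ 4) * v.2) ∧
      (-a ^ 4 < c → p₁ ≠ p₂) := by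
    intro c hc
    obtain ⟨hc1, hc2⟩ := hc
    have hs1 : (0:ℝ) ≤ 3 * a ^ 4 - c := by linarith
    have hs2 : (0:ℝ) ≤ c + a ^ 4 := by linarith
    have sx : Real.sqrt (3 * a ^ 4 - c) ^ 2 = 3 * a ^ 4 - c := Real.sq_sqrt hs1
    have sy : Real.sqrt (c + a ^ 4) ^ 2 = c + a ^ 4 := Real.sq_sqrt hs2
    intro p₁ p₂
    refine ⟨?_, ?_, ?_, ?_, ?_⟩
    · show (((Real.sqrt (3*a^4-c)/(2*a))^2 + (Real.sqrt (c+a^4)/(2*a))^2)^2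
        - 2*a^2*((Real.sqrt (3*a^4-c)/(2*a))^2 - (Real.sqrt (c+a^4)/(2*a))^2)) = c
      rw [div_pow, div_pow, sx, sy]
      field_simp
      ring
    · show ((((-(Real.sqrt (3*a^4-c)/(2*a))))^2 + (Real.sqrt (c+a^4)/(2*a))^2)^2
        - 2*a^2*((-(Real.sqrt (3*a^4-c)/(2*a)))^2 - (Real.sqrt (c+a^4)/(2*a))^2)) = c
      rw [neg_pow, div_pow, div_pow, sx, sy]
      field_simp
      ring
    · intro v
      rw [fd_formula]
      show (4*((Real.sqrt (3*a^4-c)/(2*a))^2 + (Real.sqrt (c+a^4)/(2*a))^2)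
            * (Real.sqrt (3*a^4-c)/(2*a)) - 4*a^2*(Real.sqrt (3*a^4-c)/(2*a)))*v.1
          + (4*((Real.sqrt (3*a^4-c)/(2*a))^2 + (Real.sqrt (c+a^4)/(2*a))^2)
            * (Real.sqrt (c+a^4)/(2*a)) + 4*a^2*(Real.sqrt (c+a^4)/(2*a)))*v.2
          = 4 * a * Real.sqrt (c + a ^ 4) * v.2
      rw [div_pow, div_pow, sx, sy]
      field_simp
      ring
    · intro v
      rw [fd_formula]
      show (4*((-(Real.sqrt (3*a^4-c)/(2*a)))^2 + (Real.sqrt (c+a^4)/(2*a))^2)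
            * (-(Real.sqrt (3*a^4-c)/(2*a))) - 4*a^2*(-(Real.sqrt (3*a^4-c)/(2*a))))*v.1
          + (4*((-(Real.sqrt (3*a^4-c)/(2*a)))^2 + (Real.sqrt (c+a^4)/(2*a))^2)
            * (Real.sqrt (c+a^4)/(2*a)) + 4*a^2*(Real.sqrt (c+a^4)/(2*a)))*v.2
          = 4 * a * Real.sqrt (c + a ^ 4) * v.2
      rw [neg_pow, div_pow, div_pow, sx, sy]
      field_simp
      ring
    · intro _ h
      have hx : Real.sqrt (3 * a ^ 4 - c) > 0 := Real.sqrt_pos.mpr (by linarith)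
      have h1 := congrArg Prod.fst h
      simp only [p₁, p₂] at h1
      have : Real.sqrt (3 * a ^ 4 - c) / (2 * a) = 0 := by linarith [h1]
      rw [div_eq_zero_iff] at this
      rcases this with h' | h'
      · linarith
      · exact ha' h'
  refine ⟨main, ?_⟩
  intro k hk hinj
  obtain ⟨hk1, hk2⟩ := hk
  set c := (k + 3 * a ^ 4) / 2 with hcdef
  have ha4 : (0:ℝ) < a ^ 4 := by positivity
  have hc : c ∈ Set.Ico (-a ^ 4) (3 * a ^ 4) := by
    constructor <;> [nlinarith; nlinarith]
  obtain ⟨h1, h2, g1, g2, hne⟩ := main c hc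
  have hkc : k < c := by simp only [hcdef]; linarith
  have m1 : (Real.sqrt (3 * a ^ 4 - c) / (2 * a), Real.sqrt (c + a ^ 4) / (2 * a)) ∈
      {p : ℝ × ℝ | k < (fun p : ℝ×ℝ => (p.1 ^ 2 + p.2 ^ 2) ^ 2 - 2 * a ^ 2 * (p.1 ^ 2 - p.2 ^ 2)) p} := by
    exact lt_of_lt_of_eq hkc h1.symm
  have m2 : (-(Real.sqrt (3 * a ^ 4 - c) / (2 * a)), Real.sqrt (c + a ^ 4) / (2 * a)) ∈
      {p : ℝ × ℝ | k < (fun p : ℝ×ℝ => (p.1 ^ 2 + p.2 ^ 2) ^ 2 - 2 * a ^ 2 * (p.1 ^ 2 - p.2 ^ 2)) p} := by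
    exact lt_of_lt_of_eq hkc h2.symm
  have heq : fderiv ℝ (fun p : ℝ×ℝ => (p.1 ^ 2 + p.2 ^ 2) ^ 2 - 2 * a ^ 2 * (p.1 ^ 2 - p.2 ^ 2))
        (Real.sqrt (3 * a ^ 4 - c) / (2 * a), Real.sqrt (c + a ^ 4) / (2 * a))
      = fderiv ℝ (fun p : ℝ×ℝ => (p.1 ^ 2 + p.2 ^ 2) ^ 2 - 2 * a ^ 2 * (p.1 ^ 2 - p.2 ^ 2))
        (-(Real.sqrt (3 * a ^ 4 - c) / (2 * a)), Real.sqrt (c + a ^ 4) / (2 * a)) := by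
    apply ContinuousLinearMap.ext
    intro v
    rw [g1 v, g2 v]
  have := hinj m1 m2 heq
  exact hne (by nlinarith) this
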